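/- If D is a t-(n,r,λ) design over F_q, then the collection D^⊥ = {U^⊥ : U ∈ D} of orthogonal complements (with respect to the standard inner product on F_q^n) is a t-(n, n−r, λ') design over F_q with λ' = λ · [n−t choose r]_q / [n−t choose r−t]_q. -/

import Mathlib

open Matrix

/-- The orthogonal complement of a subspace of `F^n` with respect to the standard
bilinear form (dot product). -/
def perpSub {F : Type*} [Field F] {n : ℕ} (U : Submodule F (Fin n → F)) :
    Submodule F (Fin n → F) where
  carrier := {v | ∀ u ∈ U, dotProduct u v = 0}
  add_mem' := by
    intro a b ha hb u hu
    simp [dotProduct_add, ha u hu, hb u hu]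
  zero_mem' := by
    intro u hu
    simp
  smul_mem' := by
    intro c a ha u hu
    simp [dotProduct_smul, ha u hu]

/-- The number of `M`-dimensional subspaces of `F^N`; when `|F| = q` this is the
Gaussian binomial coefficient `[N choose M]_q`. -/
noncomputable def numSubspaces (F : Type*) [Field F] (N M : ℕ) : ℕ :=
  Set.ncard {W : Submodule F (Fin N → F) | Module.finrank F W = M}

open Module

section Perp
variable {F : Type*} [Field F] {n : ℕ}

lemma mem_perpSub {U : Submodule F (Fin n → F)} {v : Fin n → F} :
    v ∈ perpSub U ↔ ∀ u ∈ U, dotProduct u v = 0 := Iff.rfl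

noncomputable def dotB : LinearMap.BilinForm F (Fin n → F) := Matrix.toBilin' 1

lemma dotB_apply (u v : Fin n → F) : dotB u v = dotProduct u v := by
  rw [dotB, Matrix.toBilin'_apply']
  simp

lemma perpSub_eq_orthogonal (U : Submodule F (Fin n → F)) :
    perpSub U = (dotB (F := F) (n := n)).orthogonal U := by
  ext v
  simp only [mem_perpSub, LinearMap.BilinForm.mem_orthogonal_iff, LinearMap.BilinForm.IsOrtho,
    dotB_apply]

lemma dotB_nondegenerate : (dotB (F := F) (n := n)).Nondegenerate := by
  rw [dotB, LinearMap.BilinForm.nondegenerate_toBilin'_iff_det_ne_zero]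
  simp

lemma dotB_refl : (dotB (F := F) (n := n)).IsRefl := by
  intro u v h
  rwa [dotB_apply, dotProduct_comm, ← dotB_apply]

lemma finrank_perpSub (U : Submodule F (Fin n → F)) :
    finrank F (perpSub U) = n - finrank F U := by
  rw [perpSub_eq_orthogonal,
    LinearMap.BilinForm.finrank_orthogonal dotB_nondegenerate, finrank_fin_fun]

lemma perpSub_perpSub (U : Submodule F (Fin n → F)) : perpSub (perpSub U) = U := by
  rw [perpSub_eq_orthogonal, perpSub_eq_orthogonal,
    LinearMap.BilinForm.orthogonal_orthogonal dotB_nondegenerate dotB_refl]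

lemma perpSub_injective : Function.Injective (perpSub (F := F) (n := n)) := by
  intro U V h
  rw [← perpSub_perpSub U, h, perpSub_perpSub]

lemma le_perpSub_iff {T U : Submodule F (Fin n → F)} : T ≤ perpSub U ↔ U ≤ perpSub T := by
  constructor <;> intro h u hu v hv
  · rw [dotProduct_comm]; exact h hv u hu
  · rw [dotProduct_comm]; exact h hv u hu

end Perp

section Count

instance submoduleFinite {F M : Type*} [Field F] [AddCommGroup M] [Module F M] [Finite M] :
    Finite (Submodule F M) :=
  Finite.of_injective (fun U => (U : Set M)) SetLike.coe_injective

/-- Double counting with constant fibers on both sides. -/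
lemma count_const {α β : Type*} {A : Set α} {B : Set β} (hA : A.Finite) (hB : B.Finite)
    (R : α → β → Prop) {c d : ℕ}
    (h1 : ∀ a ∈ A, {b ∈ B | R a b}.ncard = c)
    (h2 : ∀ b ∈ B, {a ∈ A | R a b}.ncard = d) :
    A.ncard * c = B.ncard * d := by
  classical
  have key : ∀ (a : α), {b ∈ B | R a b}.ncard = (hB.toFinset.filter (fun b => R a b)).card := by
    intro a
    rw [← Set.ncard_coe_finset]
    congr 1
    ext b
    simp [Set.Finite.mem_toFinset]
  have key2 : ∀ (b : β), {a ∈ A | R a b}.ncard = (hA.toFinset.filter (fun a => R a b)).card := by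
    intro b
    rw [← Set.ncard_coe_finset]
    congr 1
    ext a
    simp [Set.Finite.mem_toFinset]
  have hsum : ∑ a ∈ hA.toFinset, (hB.toFinset.filter (fun b => R a b)).card
      = ∑ b ∈ hB.toFinset, (hA.toFinset.filter (fun a => R a b)).card := by
    simp only [Finset.card_filter]
    rw [Finset.sum_comm]
  calc A.ncard * c = ∑ _a ∈ hA.toFinset, c := by
        rw [Finset.sum_const, Set.ncard_eq_toFinset_card A hA, smul_eq_mul]
    _ = ∑ a ∈ hA.toFinset, (hB.toFinset.filter (fun b => R a b)).card :=
        Finset.sum_congr rfl (fun a ha => by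
          rw [← key a, h1 a (hA.mem_toFinset.mp ha)])
    _ = ∑ b ∈ hB.toFinset, (hA.toFinset.filter (fun a => R a b)).card := hsum
    _ = ∑ _b ∈ hB.toFinset, d :=
        Finset.sum_congr rfl (fun b hb => by
          rw [← key2 b, h2 b (hB.mem_toFinset.mp hb)])
    _ = B.ncard * d := by
        rw [Finset.sum_const, Set.ncard_eq_toFinset_card B hB, smul_eq_mul]

end Count

section Gr
variable {F : Type*} [Field F]

noncomputable def gr (F : Type*) [Field F] (M : Type*) [AddCommGroup M] [Module F M] (k : ℕ) : ℕ :=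
  {W : Submodule F M | finrank F W = k}.ncard

lemma numSubspaces_eq_gr (N M : ℕ) :
    Set.ncard {W : Submodule F (Fin N → F) | Module.finrank F W = M} = gr F (Fin N → F) M := rfl

lemma finrank_map_inj {M M' : Type*} [AddCommGroup M] [Module F M] [AddCommGroup M'] [Module F M']
    (f : M →ₗ[F] M') (hf : Function.Injective f) (p : Submodule F M) :
    finrank F (p.map f) = finrank F p :=
  (LinearEquiv.finrank_eq (Submodule.equivMapOfInjective f hf p)).symm

lemma gr_eq_of_equiv {M M' : Type*} [AddCommGroup M] [Module F M] [AddCommGroup M'] [Module F M']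
    (e : M ≃ₗ[F] M') (k : ℕ) : gr F M k = gr F M' k := by
  have hinj : Function.Injective (Submodule.map (e : M →ₗ[F] M')) :=
    Submodule.map_injective_of_injective e.injective
  rw [gr, gr, ← Set.ncard_image_of_injective _ hinj]
  congr 1
  ext W'
  simp only [Set.mem_image, Set.mem_setOf_eq]
  constructor
  · rintro ⟨W, hW, rfl⟩
    rw [LinearEquiv.finrank_map_eq]; exact hW
  · intro hW'
    refine ⟨W'.map (e.symm : M' →ₗ[F] M), ?_, ?_⟩
    · rw [LinearEquiv.finrank_map_eq]; exact hW'
    · rw [← Submodule.map_comp]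
      convert Submodule.map_id W'
      ext x
      simp

lemma finrank_comap_mkQ {M : Type*} [AddCommGroup M] [Module F M] [FiniteDimensional F M]
    (S : Submodule F M) (Z : Submodule F (M ⧸ S)) :
    finrank F (Z.comap S.mkQ) = finrank F Z + finrank F S := by
  set X := Z.comap S.mkQ with hX
  have hSX : S ≤ X := by
    intro x hx
    have : S.mkQ x = 0 := by
      rw [← LinearMap.mem_ker, Submodule.ker_mkQ]; exact hx
    simp [hX, Submodule.mem_comap, this]
  set φ : X →ₗ[F] (M ⧸ S) := S.mkQ.comp X.subtype with hφ
  have hrange : LinearMap.range φ = Z := by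
    rw [hφ, LinearMap.range_comp, Submodule.range_subtype, hX, Submodule.map_comap_eq,
      Submodule.range_mkQ, top_inf_eq]
  have hker : LinearMap.ker φ = S.comap X.subtype := by
    rw [hφ, LinearMap.ker_comp, Submodule.ker_mkQ]
  have hkerrank : finrank F (LinearMap.ker φ) = finrank F S := by
    rw [hker, ← finrank_map_inj X.subtype X.injective_subtype (S.comap X.subtype),
      Submodule.map_comap_subtype, inf_eq_right.mpr hSX]
  have := LinearMap.finrank_range_add_finrank_ker φ
  rw [hrange, hkerrank] at this
  omega

lemma count_above {M : Type*} [AddCommGroup M] [Module F M] [FiniteDimensional F M]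
    (S : Submodule F M) {m : ℕ} (hm : finrank F S ≤ m) :
    {X : Submodule F M | S ≤ X ∧ finrank F X = m}.ncard = gr F (M ⧸ S) (m - finrank F S) := by
  have hinj : Function.Injective (fun Z : Submodule F (M ⧸ S) => Z.comap S.mkQ) := by
    intro Z₁ Z₂ h
    have h1 := congrArg (Submodule.map S.mkQ) h
    simp only at h1
    rwa [Submodule.map_comap_eq, Submodule.map_comap_eq, Submodule.range_mkQ, top_inf_eq,
      top_inf_eq] at h1
  have himg : {X : Submodule F M | S ≤ X ∧ finrank F X = m} =
      (fun Z : Submodule F (M ⧸ S) => Z.comap S.mkQ) ''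
        {Z : Submodule F (M ⧸ S) | finrank F Z = m - finrank F S} := by
    ext X
    simp only [Set.mem_image, Set.mem_setOf_eq]
    constructor
    · rintro ⟨hSX, hrk⟩
      refine ⟨X.map S.mkQ, ?_, ?_⟩
      · have h2 : (X.map S.mkQ).comap S.mkQ = X := by
          rw [Submodule.comap_map_eq, Submodule.ker_mkQ, sup_eq_left.mpr hSX]
        have := finrank_comap_mkQ S (X.map S.mkQ)
        rw [h2, hrk] at this
        omega
      · rw [Submodule.comap_map_eq, Submodule.ker_mkQ, sup_eq_left.mpr hSX]
    · rintro ⟨Z, hZ, rfl⟩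
      constructor
      · intro x hx
        have : S.mkQ x = 0 := by
          rw [← LinearMap.mem_ker, Submodule.ker_mkQ]; exact hx
        simp [Submodule.mem_comap, this]
      · rw [finrank_comap_mkQ, hZ]; omega
  rw [himg, Set.ncard_image_of_injective _ hinj, gr]

lemma count_in {M : Type*} [AddCommGroup M] [Module F M] [FiniteDimensional F M]
    (S W : Submodule F M) (hSW : S ≤ W) (m : ℕ) :
    {X : Submodule F M | S ≤ X ∧ X ≤ W ∧ finrank F X = m}.ncard
      = {Y : Submodule F ↥W | S.comap W.subtype ≤ Y ∧ finrank F Y = m}.ncard := by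
  have hinj : Function.Injective (fun Y : Submodule F ↥W => Y.map W.subtype) :=
    Submodule.map_injective_of_injective W.injective_subtype
  have himg : {X : Submodule F M | S ≤ X ∧ X ≤ W ∧ finrank F X = m} =
      (fun Y : Submodule F ↥W => Y.map W.subtype) ''
        {Y : Submodule F ↥W | S.comap W.subtype ≤ Y ∧ finrank F Y = m} := by
    ext X
    simp only [Set.mem_image, Set.mem_setOf_eq]
    constructor
    · rintro ⟨hSX, hXW, hrk⟩
      refine ⟨X.comap W.subtype, ⟨Submodule.comap_mono hSX, ?_⟩, ?_⟩
      · have hmc : (X.comap W.subtype).map W.subtype = X := by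
          rw [Submodule.map_comap_subtype, inf_eq_right.mpr hXW]
        rw [← finrank_map_inj W.subtype W.injective_subtype (X.comap W.subtype), hmc, hrk]
      · rw [Submodule.map_comap_subtype, inf_eq_right.mpr hXW]
    · rintro ⟨Y, ⟨hSY, hrk⟩, rfl⟩
      refine ⟨?_, ?_, ?_⟩
      · have := Submodule.map_mono (f := W.subtype) hSY
        rwa [Submodule.map_comap_subtype, inf_eq_right.mpr hSW] at this
      · exact Submodule.map_subtype_le W Y
      · rw [finrank_map_inj W.subtype W.injective_subtype]; exact hrk
  rw [himg, Set.ncard_image_of_injective _ hinj]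
end Gr

section CountBetween
variable {F : Type*} [Field F]

lemma gr_eq_numSubspaces {M : Type*} [AddCommGroup M] [Module F M] [FiniteDimensional F M]
    (k : ℕ) : gr F M k = numSubspaces F (finrank F M) k := by
  obtain ⟨e⟩ := FiniteDimensional.nonempty_linearEquiv_of_finrank_eq
    (M := M) (M' := Fin (finrank F M) → F) (by rw [finrank_fin_fun])
  rw [gr_eq_of_equiv e, numSubspaces, numSubspaces_eq_gr]

lemma count_between {M : Type*} [AddCommGroup M] [Module F M] [FiniteDimensional F M]
    (S W : Submodule F M) (hSW : S ≤ W) {m : ℕ} (hm : finrank F S ≤ m) :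
    {X : Submodule F M | S ≤ X ∧ X ≤ W ∧ finrank F X = m}.ncard
      = numSubspaces F (finrank F W - finrank F S) (m - finrank F S) := by
  rw [count_in S W hSW m]
  have hS' : finrank F (S.comap W.subtype) = finrank F S := by
    rw [← finrank_map_inj W.subtype W.injective_subtype (S.comap W.subtype),
      Submodule.map_comap_subtype, inf_eq_right.mpr hSW]
  rw [count_above (S.comap W.subtype) (by rw [hS']; exact hm), hS']
  rw [gr_eq_numSubspaces]
  congr 1
  have h1 := Submodule.finrank_quotient_add_finrank (S.comap W.subtype)
  rw [hS'] at h1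
  omega

lemma exists_submodule_between {M : Type*} [AddCommGroup M] [Module F M] [FiniteDimensional F M]
    (S W : Submodule F M) (hSW : S ≤ W) {m : ℕ} (h1 : finrank F S ≤ m) (h2 : m ≤ finrank F W) :
    ∃ X : Submodule F M, S ≤ X ∧ X ≤ W ∧ finrank F X = m := by
  induction m, h1 using Nat.le_induction with
  | base => exact ⟨S, le_refl _, hSW, rfl⟩
  | succ m hm ih =>
    obtain ⟨X, hSX, hXW, hrk⟩ := ih (Nat.le_of_succ_le h2)
    have hXltW : X < W := by
      rcases lt_or_eq_of_le hXW with h | h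
      · exact h
      · exfalso; rw [h] at hrk; omega
    obtain ⟨x, hxW, hxX⟩ := SetLike.exists_of_lt hXltW
    have hx0 : x ≠ 0 := by rintro rfl; exact hxX X.zero_mem
    refine ⟨X ⊔ Submodule.span F {x}, le_trans hSX le_sup_left, ?_, ?_⟩
    · exact sup_le hXW ((Submodule.span_singleton_le_iff_mem x W).mpr hxW)
    · have hdisj : X ⊓ Submodule.span F {x} = ⊥ := by
        rw [← disjoint_iff]
        exact Submodule.disjoint_span_singleton.mpr (fun h => absurd h hxX)
      have := Submodule.finrank_sup_add_finrank_inf_eq X (Submodule.span F {x})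
      rw [hdisj, hrk, finrank_span_singleton hx0, finrank_bot] at this
      omega

lemma numSubspaces_pos [Finite F] {N M : ℕ} (h : M ≤ N) : 0 < numSubspaces F N M := by
  obtain ⟨X, _, _, hrk⟩ := exists_submodule_between (⊥ : Submodule F (Fin N → F)) ⊤ bot_le
    (m := M) (by rw [finrank_bot]; exact Nat.zero_le M)
    (by rw [finrank_top, finrank_fin_fun]; exact h)
  have hfin : Finite (Submodule F (Fin N → F)) :=
    Finite.of_injective (fun U => (U : Set (Fin N → F))) SetLike.coe_injective
  rw [numSubspaces, Set.ncard_pos (Set.toFinite _)]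
  exact ⟨X, hrk⟩

lemma numSubspaces_eq_zero {N M : ℕ} (h : N < M) : numSubspaces F N M = 0 := by
  have hempty : {W : Submodule F (Fin N → F) | Module.finrank F W = M} = ∅ := by
    ext X
    simp only [Set.mem_setOf_eq, Set.mem_empty_iff_false, iff_false]
    intro hX
    have := Submodule.finrank_le X
    rw [hX, finrank_fin_fun] at this
    omega
  rw [numSubspaces, hempty, Set.ncard_empty]

lemma numSubspaces_one_lt [Finite F] (m : ℕ) :
    numSubspaces F m 1 < numSubspaces F (m + 1) 1 := by
  have hfin : Finite (Submodule F (Fin (m+1) → F)) :=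
    Finite.of_injective (fun U => (U : Set (Fin (m+1) → F))) SetLike.coe_injective
  obtain ⟨W₀, _, _, hrkW₀⟩ := exists_submodule_between (⊥ : Submodule F (Fin (m+1) → F)) ⊤ bot_le
    (m := m) (by rw [finrank_bot]; exact Nat.zero_le m)
    (by rw [finrank_top, finrank_fin_fun]; omega)
  have hA : {X : Submodule F (Fin (m+1) → F) | X ≤ W₀ ∧ finrank F X = 1}.ncard
      = numSubspaces F m 1 := by
    have := count_between (⊥ : Submodule F (Fin (m+1) → F)) W₀ bot_le
      (m := 1) (by rw [finrank_bot]; omega)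
    rw [finrank_bot, hrkW₀, Nat.sub_zero, Nat.sub_zero] at this
    rw [← this]
    congr 1
    ext X
    simp
  rw [← hA]
  have hB : numSubspaces F (m+1) 1
      = {X : Submodule F (Fin (m+1) → F) | finrank F X = 1}.ncard := rfl
  rw [hB]
  apply Set.ncard_lt_ncard _ (Set.toFinite _)
  constructor
  · intro X hX; exact hX.2
  · intro hsub
    have hW₀top : W₀ ≠ ⊤ := by
      intro h
      rw [h, finrank_top, finrank_fin_fun] at hrkW₀
      omega
    have : ∃ x, x ∉ W₀ := by
      by_contra h
      push_neg at h
      exact hW₀top (Submodule.eq_top_iff'.mpr h)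
    obtain ⟨x, hx⟩ := this
    have hx0 : x ≠ 0 := by rintro rfl; exact hx W₀.zero_mem
    have hmem : Submodule.span F {x} ∈ {X : Submodule F (Fin (m+1) → F) | finrank F X = 1} :=
      finrank_span_singleton hx0
    have := hsub hmem
    simp only [Set.mem_setOf_eq] at this
    exact hx (this.1 (Submodule.mem_span_singleton_self x))
end CountBetween

section Duality
variable {F : Type*} [Field F]

lemma numSubspaces_dual {N M : ℕ} (h : M ≤ N) :
    numSubspaces F N M = numSubspaces F N (N - M) := by
  rw [numSubspaces, numSubspaces, ← Set.ncard_image_of_injective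
    {W : Submodule F (Fin N → F) | Module.finrank F W = M} (perpSub_injective (F := F) (n := N))]
  congr 1
  ext V
  simp only [Set.mem_image, Set.mem_setOf_eq]
  constructor
  · rintro ⟨U, hU, rfl⟩
    rw [finrank_perpSub, hU]
  · intro hV
    refine ⟨perpSub V, ?_, perpSub_perpSub V⟩
    rw [finrank_perpSub, hV]
    omega
end Duality

section Design
variable {F : Type*} [Field F] [Fintype F] {n r t lam : ℕ}
variable {D : Set (Submodule F (Fin n → F))}
open Module

lemma design_base (htr : t ≤ r)
    (hblocks : ∀ U ∈ D, finrank F U = r)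
    (hdesign : ∀ T : Submodule F (Fin n → F), finrank F T = t → {U ∈ D | T ≤ U}.ncard = lam)
    (S : Submodule F (Fin n → F)) {i : ℕ} (hS : finrank F S = i) (hit : i ≤ t) :
    {U ∈ D | S ≤ U}.ncard * numSubspaces F (r - i) (t - i)
      = numSubspaces F (n - i) (t - i) * lam := by
  have h := count_const (A := {U ∈ D | S ≤ U})
      (B := {T' : Submodule F (Fin n → F) | finrank F T' = t ∧ S ≤ T'})
      (Set.toFinite _) (Set.toFinite _) (fun U T' => T' ≤ U)
      (c := numSubspaces F (r - i) (t - i)) (d := lam) ?h1 ?h2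
  · rw [h]
    congr 1
    have hset : {T' : Submodule F (Fin n → F) | finrank F T' = t ∧ S ≤ T'}
        = {X : Submodule F (Fin n → F) | S ≤ X ∧ X ≤ ⊤ ∧ finrank F X = t} := by
      ext X; simp only [Set.mem_setOf_eq, le_top, true_and, and_true]; tauto
    rw [hset, count_between S ⊤ le_top (m := t) (by rw [hS]; exact hit), hS, finrank_top,
      finrank_fin_fun]
  case h1 =>
    rintro U ⟨hUD, hSU⟩
    have hset : {T' ∈ {T' : Submodule F (Fin n → F) | finrank F T' = t ∧ S ≤ T'} | T' ≤ U}
        = {X : Submodule F (Fin n → F) | S ≤ X ∧ X ≤ U ∧ finrank F X = t} := by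
      ext X; simp only [Set.mem_setOf_eq]; tauto
    rw [hset, count_between S U hSU (m := t) (by rw [hS]; exact hit), hS, hblocks U hUD]
  case h2 =>
    rintro T' ⟨hT't, hST'⟩
    have hset : {U ∈ {U ∈ D | S ≤ U} | T' ≤ U} = {U ∈ D | T' ≤ U} := by
      ext U
      simp only [Set.mem_setOf_eq]
      exact ⟨fun h => ⟨h.1.1, h.2⟩, fun h => ⟨⟨h.1, le_trans hST' h.2⟩, h.2⟩⟩
    rw [hset, hdesign T' hT't]

lemma design_const (htr : t ≤ r) (hrn : r ≤ n)
    (hblocks : ∀ U ∈ D, finrank F U = r)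
    (hdesign : ∀ T : Submodule F (Fin n → F), finrank F T = t → {U ∈ D | T ≤ U}.ncard = lam) :
    ∀ j, j ≤ t → ∀ i, i + j ≤ t →
    ∀ S₁ W₁ S₂ W₂ : Submodule F (Fin n → F),
      S₁ ≤ W₁ → S₂ ≤ W₂ → finrank F S₁ = i → finrank F S₂ = i →
      finrank F W₁ = n - j → finrank F W₂ = n - j →
      {U ∈ D | S₁ ≤ U ∧ U ≤ W₁}.ncard = {U ∈ D | S₂ ≤ U ∧ U ≤ W₂}.ncard := by
  intro j
  induction j with
  | zero =>
    intro _ i hij S₁ W₁ S₂ W₂ hle₁ hle₂ hS₁ hS₂ hW₁ hW₂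
    have hW₁top : W₁ = ⊤ :=
      Submodule.eq_top_of_finrank_eq (by rw [hW₁, finrank_fin_fun]; omega)
    have hW₂top : W₂ = ⊤ :=
      Submodule.eq_top_of_finrank_eq (by rw [hW₂, finrank_fin_fun]; omega)
    subst hW₁top hW₂top
    have hs1 : {U ∈ D | S₁ ≤ U ∧ U ≤ ⊤} = {U ∈ D | S₁ ≤ U} := by
      ext U; simp only [Set.mem_setOf_eq, le_top, and_true]
    have hs2 : {U ∈ D | S₂ ≤ U ∧ U ≤ ⊤} = {U ∈ D | S₂ ≤ U} := by
      ext U; simp only [Set.mem_setOf_eq, le_top, and_true]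
    rw [hs1, hs2]
    have e₁ := design_base htr hblocks hdesign S₁ hS₁ (by omega)
    have e₂ := design_base htr hblocks hdesign S₂ hS₂ (by omega)
    have hpos : 0 < numSubspaces F (r - i) (t - i) :=
      numSubspaces_pos (by omega)
    exact Nat.eq_of_mul_eq_mul_right hpos (e₁.trans e₂.symm)
  | succ j ih =>
    intro hjt i hij S₁ W₁ S₂ W₂ hle₁ hle₂ hS₁ hS₂ hW₁ hW₂
    -- reference subspaces
    obtain ⟨Wr, -, -, hWr⟩ := exists_submodule_between (⊥ : Submodule F (Fin n → F)) ⊤ bot_le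
      (m := n - j) (by rw [finrank_bot]; omega) (by rw [finrank_top, finrank_fin_fun]; omega)
    obtain ⟨Sc, -, hScW, hSc⟩ := exists_submodule_between (⊥ : Submodule F (Fin n → F)) Wr bot_le
      (m := i) (by rw [finrank_bot]; omega) (by rw [hWr]; omega)
    obtain ⟨Sd, -, hSdW, hSd⟩ := exists_submodule_between (⊥ : Submodule F (Fin n → F)) Wr bot_le
      (m := i + 1) (by rw [finrank_bot]; omega) (by rw [hWr]; omega)
    have key : ∀ S W : Submodule F (Fin n → F), S ≤ W → finrank F S = i →
        finrank F W = n - (j + 1) →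
        {U ∈ D | S ≤ U ∧ U ≤ W}.ncard
            * (numSubspaces F (r - i) 1 - numSubspaces F (r - i - 1) 1)
          + (numSubspaces F (n - j - i) 1 - numSubspaces F (n - j - 1 - i) 1)
            * {U ∈ D | Sd ≤ U ∧ U ≤ Wr}.ncard
        = {U ∈ D | Sc ≤ U ∧ U ≤ Wr}.ncard
            * (numSubspaces F (r - i) 1 - numSubspaces F (r - i - 1) 1) := by
      intro S W hSW hS hW
      obtain ⟨W', hWW', -, hW'⟩ := exists_submodule_between W ⊤ le_top (m := n - j)
        (by rw [hW]; omega) (by rw [finrank_top, finrank_fin_fun]; omega)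
      have hle' : S ≤ W' := le_trans hSW hWW'
      have hsplit : {U ∈ D | S ≤ U ∧ U ≤ W'}.ncard
          = {U ∈ D | S ≤ U ∧ U ≤ W}.ncard + {U ∈ D | S ≤ U ∧ U ≤ W' ∧ ¬ U ≤ W}.ncard := by
        rw [← Set.ncard_union_eq ?disj (Set.toFinite _) (Set.toFinite _)]
        · congr 1
          ext U
          simp only [Set.mem_setOf_eq, Set.mem_union]
          constructor
          · rintro ⟨hUD, hSU, hUW'⟩
            by_cases hUW : U ≤ W
            · exact Or.inl ⟨hUD, hSU, hUW⟩
            · exact Or.inr ⟨hUD, hSU, hUW', hUW⟩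
          · rintro (⟨hUD, hSU, hUW⟩ | ⟨hUD, hSU, hUW', -⟩)
            · exact ⟨hUD, hSU, le_trans hUW hWW'⟩
            · exact ⟨hUD, hSU, hUW'⟩
        case disj =>
          rw [Set.disjoint_left]
          rintro U ⟨-, -, hUW⟩ ⟨-, -, -, hnUW⟩
          exact hnUW hUW
      have hcW' : {U ∈ D | S ≤ U ∧ U ≤ W'}.ncard = {U ∈ D | Sc ≤ U ∧ U ≤ Wr}.ncard :=
        ih (by omega) i (by omega) S W' Sc Wr hle' hScW hS hSc hW' hWr
      have hcount : {U ∈ D | S ≤ U ∧ U ≤ W' ∧ ¬ U ≤ W}.ncard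
            * (numSubspaces F (r - i) 1 - numSubspaces F (r - i - 1) 1)
          = (numSubspaces F (n - j - i) 1 - numSubspaces F (n - j - 1 - i) 1)
            * {U ∈ D | Sd ≤ U ∧ U ≤ Wr}.ncard := by
        have h := count_const (A := {U ∈ D | S ≤ U ∧ U ≤ W' ∧ ¬ U ≤ W})
            (B := {S'' : Submodule F (Fin n → F) |
              finrank F S'' = i + 1 ∧ S ≤ S'' ∧ S'' ≤ W' ∧ ¬ S'' ≤ W})
            (Set.toFinite _) (Set.toFinite _) (fun U S'' => S'' ≤ U)
            (c := numSubspaces F (r - i) 1 - numSubspaces F (r - i - 1) 1)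
            (d := {U ∈ D | Sd ≤ U ∧ U ≤ Wr}.ncard) ?hh1 ?hh2
        · rw [h]
          congr 1
          have hBdiff : {S'' : Submodule F (Fin n → F) |
                finrank F S'' = i + 1 ∧ S ≤ S'' ∧ S'' ≤ W' ∧ ¬ S'' ≤ W}
              = {X : Submodule F (Fin n → F) | S ≤ X ∧ X ≤ W' ∧ finrank F X = i + 1}
                \ {X : Submodule F (Fin n → F) | S ≤ X ∧ X ≤ W ∧ finrank F X = i + 1} := by
            ext X
            simp only [Set.mem_diff, Set.mem_setOf_eq]
            constructor
            · rintro ⟨h1, h2, h3, h4⟩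
              exact ⟨⟨h2, h3, h1⟩, fun h' => h4 h'.2.1⟩
            · rintro ⟨⟨h1, h2, h3⟩, h4⟩
              refine ⟨h3, h1, h2, fun h' => h4 ⟨h1, h', h3⟩⟩
          rw [hBdiff, Set.ncard_diff ?hsub (Set.toFinite _),
            count_between S W' hle' (m := i + 1) (by rw [hS]; omega),
            count_between S W hSW (m := i + 1) (by rw [hS]; omega), hS, hW', hW]
          · have ha : i + 1 - i = 1 := by omega
            have hb : n - (j + 1) - i = n - j - 1 - i := by omega
            rw [ha, hb]
          case hsub =>
            rintro X ⟨h1, h2, h3⟩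
            exact ⟨h1, le_trans h2 hWW', h3⟩
        case hh1 =>
          rintro U ⟨hUD, hSU, hUW', hnUW⟩
          have hrkU : finrank F U = r := hblocks U hUD
          have hUinfW : finrank F (U ⊓ W : Submodule F (Fin n → F)) = r - 1 := by
            have hsup := Submodule.finrank_sup_add_finrank_inf_eq U W
            have hWle : W ≤ U ⊔ W := le_sup_right
            have hlt : W < U ⊔ W := by
              rcases lt_or_eq_of_le hWle with h' | h'
              · exact h'
              · exfalso
                exact hnUW (by rw [h']; exact le_sup_left)
            have hsupW' : U ⊔ W ≤ W' := sup_le hUW' hWW'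
            have h1 := Submodule.finrank_lt_finrank_of_lt hlt
            have h2 := Submodule.finrank_mono hsupW'
            rw [hW'] at h2
            rw [hW] at h1
            rw [hrkU, hW] at hsup
            omega
          have hfib : {S'' ∈ {S'' : Submodule F (Fin n → F) |
                finrank F S'' = i + 1 ∧ S ≤ S'' ∧ S'' ≤ W' ∧ ¬ S'' ≤ W} | S'' ≤ U}
              = {X : Submodule F (Fin n → F) | S ≤ X ∧ X ≤ U ∧ finrank F X = i + 1}
                \ {X : Submodule F (Fin n → F) | S ≤ X ∧ X ≤ U ⊓ W ∧ finrank F X = i + 1} := by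
            ext X
            simp only [Set.mem_diff, Set.mem_setOf_eq, le_inf_iff]
            constructor
            · rintro ⟨⟨h1, h2, h3, h4⟩, h5⟩
              exact ⟨⟨h2, h5, h1⟩, fun h' => h4 h'.2.1.2⟩
            · rintro ⟨⟨h1, h2, h3⟩, h4⟩
              exact ⟨⟨h3, h1, le_trans h2 hUW', fun h' => h4 ⟨h1, ⟨h2, h'⟩, h3⟩⟩, h2⟩
          rw [hfib, Set.ncard_diff ?hsub2 (Set.toFinite _),
            count_between S U hSU (m := i + 1) (by rw [hS]; omega),
            count_between S (U ⊓ W) (le_inf hSU hSW) (m := i + 1) (by rw [hS]; omega),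
            hS, hrkU, hUinfW]
          · have ha : i + 1 - i = 1 := by omega
            have hb : r - 1 - i = r - i - 1 := by omega
            rw [ha, hb]
          case hsub2 =>
            rintro X ⟨h1, h2, h3⟩
            exact ⟨h1, le_trans h2 inf_le_left, h3⟩
        case hh2 =>
          rintro S'' ⟨hrkS'', hSS'', hS''W', hnS''W⟩
          have hset : {U ∈ {U ∈ D | S ≤ U ∧ U ≤ W' ∧ ¬ U ≤ W} | S'' ≤ U}
              = {U ∈ D | S'' ≤ U ∧ U ≤ W'} := by
            ext U
            simp only [Set.mem_setOf_eq]
            constructor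
            · rintro ⟨⟨h1, h2, h3, h4⟩, h5⟩
              exact ⟨h1, h5, h3⟩
            · rintro ⟨h1, h2, h3⟩
              exact ⟨⟨h1, le_trans hSS'' h2, h3, fun h' => hnS''W (le_trans h2 h')⟩, h2⟩
          rw [hset]
          exact ih (by omega) (i + 1) (by omega) S'' W' Sd Wr hS''W' hSdW hrkS'' hSd hW' hWr
      calc {U ∈ D | S ≤ U ∧ U ≤ W}.ncard
              * (numSubspaces F (r - i) 1 - numSubspaces F (r - i - 1) 1)
            + (numSubspaces F (n - j - i) 1 - numSubspaces F (n - j - 1 - i) 1)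
              * {U ∈ D | Sd ≤ U ∧ U ≤ Wr}.ncard
          = {U ∈ D | S ≤ U ∧ U ≤ W}.ncard
              * (numSubspaces F (r - i) 1 - numSubspaces F (r - i - 1) 1)
            + {U ∈ D | S ≤ U ∧ U ≤ W' ∧ ¬ U ≤ W}.ncard
              * (numSubspaces F (r - i) 1 - numSubspaces F (r - i - 1) 1) := by
            rw [hcount]
        _ = {U ∈ D | S ≤ U ∧ U ≤ W'}.ncard
              * (numSubspaces F (r - i) 1 - numSubspaces F (r - i - 1) 1) := by
            rw [hsplit, Nat.add_mul]
        _ = {U ∈ D | Sc ≤ U ∧ U ≤ Wr}.ncard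
              * (numSubspaces F (r - i) 1 - numSubspaces F (r - i - 1) 1) := by
            rw [hcW']
    have e₁ := key S₁ W₁ hle₁ hS₁ hW₁
    have e₂ := key S₂ W₂ hle₂ hS₂ hW₂
    have hq1pos : 0 < numSubspaces F (r - i) 1 - numSubspaces F (r - i - 1) 1 := by
      have hmono := numSubspaces_one_lt (F := F) (r - i - 1)
      have hri : r - i - 1 + 1 = r - i := by omega
      rw [hri] at hmono
      omega
    have hfin : {U ∈ D | S₁ ≤ U ∧ U ≤ W₁}.ncard
          * (numSubspaces F (r - i) 1 - numSubspaces F (r - i - 1) 1)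
        = {U ∈ D | S₂ ≤ U ∧ U ≤ W₂}.ncard
          * (numSubspaces F (r - i) 1 - numSubspaces F (r - i - 1) 1) := by
      omega
    exact Nat.eq_of_mul_eq_mul_right hq1pos hfin
end Design


theorem stmt_6 {F : Type*} [Field F] [Fintype F] {n r t lam : ℕ}
    (htpos : 1 ≤ t) (htr : t ≤ r) (hrn : r ≤ n)
    (D : Set (Submodule F (Fin n → F)))
    (hblocks : ∀ U ∈ D, Module.finrank F U = r)
    (hdesign : ∀ T : Submodule F (Fin n → F), Module.finrank F T = t →
      {U ∈ D | T ≤ U}.ncard = lam) :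
    (∀ V ∈ perpSub '' D, Module.finrank F V = n - r) ∧
    (∀ T : Submodule F (Fin n → F), Module.finrank F T = t →
      {V ∈ perpSub '' D | T ≤ V}.ncard * numSubspaces F (n - t) (r - t) =
        lam * numSubspaces F (n - t) r) := by
  constructor
  · rintro V ⟨U, hUD, rfl⟩
    rw [finrank_perpSub, hblocks U hUD]
  intro T hT
  have hTperp : finrank F (perpSub T) = n - t := by rw [finrank_perpSub, hT]
  have himg : {V ∈ perpSub '' D | T ≤ V} = perpSub '' {U ∈ D | U ≤ perpSub T} := by
    ext V
    simp only [Set.mem_setOf_eq, Set.mem_image]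
    constructor
    · rintro ⟨⟨U, hUD, rfl⟩, hTV⟩
      exact ⟨U, ⟨hUD, le_perpSub_iff.mp hTV⟩, rfl⟩
    · rintro ⟨U, ⟨hUD, hUT⟩, rfl⟩
      exact ⟨⟨U, hUD, rfl⟩, le_perpSub_iff.mpr hUT⟩
  rw [himg, Set.ncard_image_of_injective _ perpSub_injective]
  by_cases hcase : r + t ≤ n
  case neg =>
    have h0 : {U ∈ D | U ≤ perpSub T} = ∅ := by
      ext U
      simp only [Set.mem_setOf_eq, Set.mem_empty_iff_false, iff_false, not_and]
      intro hUD hUT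
      have := Submodule.finrank_mono hUT
      rw [hblocks U hUD, hTperp] at this
      omega
    rw [h0, Set.ncard_empty, numSubspaces_eq_zero (F := F) (N := n - t) (M := r) (by omega)]
    simp
  case pos =>
    -- e1 : averaging over all (n-t)-dimensional W
    have hconst := design_const htr hrn hblocks hdesign t le_rfl 0 (by omega)
    have e1 : numSubspaces F n (n - t) * {U ∈ D | U ≤ perpSub T}.ncard
        = D.ncard * numSubspaces F (n - r) (n - t - r) := by
      have h := count_const (A := {W : Submodule F (Fin n → F) | finrank F W = n - t})
          (B := D) (Set.toFinite _) (Set.toFinite _) (fun W U => U ≤ W)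
          (c := {U ∈ D | U ≤ perpSub T}.ncard)
          (d := numSubspaces F (n - r) (n - t - r)) ?e1h1 ?e1h2
      · exact h
      case e1h1 =>
        intro W hW
        simp only [Set.mem_setOf_eq] at hW
        have := hconst ⊥ W ⊥ (perpSub T) bot_le bot_le (finrank_bot F _) (finrank_bot F _) hW hTperp
        have hs1 : {U ∈ D | ⊥ ≤ U ∧ U ≤ W} = {U ∈ D | U ≤ W} := by
          ext U; simp only [Set.mem_setOf_eq, bot_le, true_and]
        have hs2 : {U ∈ D | ⊥ ≤ U ∧ U ≤ perpSub T} = {U ∈ D | U ≤ perpSub T} := by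
          ext U; simp only [Set.mem_setOf_eq, bot_le, true_and]
        rw [hs1, hs2] at this
        exact this
      case e1h2 =>
        intro U hUD
        have hset : {W ∈ {W : Submodule F (Fin n → F) | finrank F W = n - t} | U ≤ W}
            = {X : Submodule F (Fin n → F) | U ≤ X ∧ X ≤ ⊤ ∧ finrank F X = n - t} := by
          ext X; simp only [Set.mem_setOf_eq, le_top, true_and, and_true]; tauto
        rw [hset, count_between U ⊤ le_top (m := n - t) (by rw [hblocks U hUD]; omega),
          hblocks U hUD, finrank_top, finrank_fin_fun]
    -- e2 : D.ncard * [r,t] = [n,t] * lam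
    have e2 : D.ncard * numSubspaces F r t = numSubspaces F n t * lam := by
      have h := design_base htr hblocks hdesign (⊥ : Submodule F (Fin n → F)) (finrank_bot F _)
        (by omega)
      have hs : {U ∈ D | (⊥ : Submodule F (Fin n → F)) ≤ U} = D := by
        ext U; simp only [Set.mem_setOf_eq, bot_le, and_true]
      rw [hs] at h
      simpa using h
    -- e3 : pair counting in F^(n-t)
    have e3 : numSubspaces F (n - t) r * numSubspaces F r (r - t)
        = numSubspaces F (n - t) (r - t) * numSubspaces F (n - r) t := by
      have h := count_const
          (A := {A' : Submodule F (Fin (n - t) → F) | finrank F A' = r})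
          (B := {B' : Submodule F (Fin (n - t) → F) | finrank F B' = r - t})
          (Set.toFinite _) (Set.toFinite _) (fun A' B' => B' ≤ A')
          (c := numSubspaces F r (r - t)) (d := numSubspaces F (n - r) t) ?e3h1 ?e3h2
      · exact h
      case e3h1 =>
        intro A' hA'
        simp only [Set.mem_setOf_eq] at hA'
        have hset : {B' ∈ {B' : Submodule F (Fin (n - t) → F) | finrank F B' = r - t} | B' ≤ A'}
            = {X : Submodule F (Fin (n - t) → F) | ⊥ ≤ X ∧ X ≤ A' ∧ finrank F X = r - t} := by
          ext X; simp only [Set.mem_setOf_eq, bot_le, true_and]; tauto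
        rw [hset, count_between ⊥ A' bot_le (m := r - t) (by rw [finrank_bot]; omega),
          finrank_bot, hA']
        simp
      case e3h2 =>
        intro B' hB'
        simp only [Set.mem_setOf_eq] at hB'
        have hset : {A' ∈ {A' : Submodule F (Fin (n - t) → F) | finrank F A' = r} | B' ≤ A'}
            = {X : Submodule F (Fin (n - t) → F) | B' ≤ X ∧ X ≤ ⊤ ∧ finrank F X = r} := by
          ext X; simp only [Set.mem_setOf_eq, le_top, true_and, and_true]; tauto
        rw [hset, count_between B' ⊤ le_top (m := r) (by rw [hB']; omega), hB', finrank_top,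
          finrank_fin_fun]
        have h1 : n - t - (r - t) = n - r := by omega
        have h2 : r - (r - t) = t := by omega
        rw [h1, h2]
    -- dualities
    have d1 : numSubspaces F n (n - t) = numSubspaces F n t := by
      rw [numSubspaces_dual (F := F) (N := n) (M := t) (by omega)]
    have d2 : numSubspaces F r (r - t) = numSubspaces F r t := by
      rw [numSubspaces_dual (F := F) (N := r) (M := t) (by omega)]
    have d3 : numSubspaces F (n - r) t = numSubspaces F (n - r) (n - t - r) := by
      rw [numSubspaces_dual (F := F) (N := n - r) (M := t) (by omega)]
      have : n - r - t = n - t - r := by omega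
      rw [this]
    rw [d1] at e1
    rw [d2, d3] at e3
    -- final algebra
    have P1 : 0 < numSubspaces F r t := numSubspaces_pos htr
    have P2 : 0 < numSubspaces F n t := numSubspaces_pos (by omega)
    set m := {U ∈ D | U ≤ perpSub T}.ncard with hm
    set a := numSubspaces F n t
    set b := numSubspaces F r t
    set c := numSubspaces F (n - t) (r - t)
    set dd := numSubspaces F (n - t) r
    set e := numSubspaces F (n - r) (n - t - r)
    set Dn := D.ncard
    -- e1 : a * m = Dn * e ; e2 : Dn * b = a * lam ; e3 : dd * b = c * e
    have goal' : (m * c) * (b * a) = (lam * dd) * (b * a) := by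
      zify at e1 e2 e3 ⊢
      linear_combination (c * b : ℤ) * e1 + (c * e : ℤ) * e2 - ((lam : ℤ) * a) * e3
    exact Nat.eq_of_mul_eq_mul_right (Nat.mul_pos P1 P2) goal'
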